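/- Let X be a nonempty set and G ≤ S_X. There is a one-to-one correspondence between racks (X,*) satisfying Lmlt(X,*) = G and rack envelopes (G, Λ): the rack (X,*) corresponds to the envelope (G, (L_x : x ∈ X/G)), and the envelope (G, (λ_x : x ∈ X/G)) corresponds to the rack whose left translations are given by L_y = g⁻¹ λ_x g for y ∈ xG, g ∈ G with xg = y; these two assignments are mutually inverse. -/

import Mathlib

/-- A rack: a binary operation with bijective left translations satisfying the left
self-distributive law. -/
structure RackStr (X : Type*) where
  op : X → X → X
  bij : ∀ x, Function.Bijective (op x)
  self_distrib : ∀ x y z, op x (op y z) = op (op x y) (op x z)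

/-- A quandle: an idempotent rack. -/
structure QuandleStr (X : Type*) extends RackStr X where
  idem : ∀ x, op x x = x

namespace RackStr

variable {X : Type*}

/-- The left translation `L_x : y ↦ x * y`, as a permutation of `X`. -/
noncomputable def L (Q : RackStr X) (x : X) : Equiv.Perm X :=
  Equiv.ofBijective (Q.op x) (Q.bij x)

/-- The left multiplication group `Lmlt(X,*) = ⟨L_x : x ∈ X⟩ ≤ S_X`. -/
noncomputable def lmlt (Q : RackStr X) : Subgroup (Equiv.Perm X) :=
  Subgroup.closure (Set.range Q.L)

end RackStr

/-- `R` is a complete set of representatives of the orbits of `G ≤ S_X` on `X`: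
every `y ∈ X` lies in the orbit of a unique element of `R`. -/
def IsTransversal {X : Type*} (G : Subgroup (Equiv.Perm X)) (R : Set X) : Prop :=
  ∀ y : X, ∃! x : X, x ∈ R ∧ ∃ g ∈ G, g • y = x

/-- The stabilizer `G_x` of `x` in `G`, as a subgroup of `S_X`. -/
def stabIn {X : Type*} (G : Subgroup (Equiv.Perm X)) (x : X) : Subgroup (Equiv.Perm X) :=
  G ⊓ MulAction.stabilizer (Equiv.Perm X) x

/-- The centralizer `C_G(G_x)` of the stabilizer `G_x` in `G`, as a subgroup of `S_X`. -/
def cgStab {X : Type*} (G : Subgroup (Equiv.Perm X)) (x : X) : Subgroup (Equiv.Perm X) :=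
  G ⊓ Subgroup.centralizer (stabIn G x : Set (Equiv.Perm X))

/-- The center `Z(G_x)` of the stabilizer `G_x`, as a subgroup of `S_X`. -/
def zStab {X : Type*} (G : Subgroup (Equiv.Perm X)) (x : X) : Subgroup (Equiv.Perm X) :=
  stabIn G x ⊓ Subgroup.centralizer (stabIn G x : Set (Equiv.Perm X))

/-- The conjugacy class `a^G = { g⁻¹ a g : g ∈ G }` of `a` under `G`
(written in left-action convention). -/
def conjClassOf {X : Type*} (G : Subgroup (Equiv.Perm X)) (a : Equiv.Perm X) :
    Set (Equiv.Perm X) :=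
  {h | ∃ g ∈ G, h = g * a * g⁻¹}

/-- A rack envelope over `G` (with orbit representatives `R`): a tuple
`(λ_x ∈ C_G(G_x) : x ∈ R)` such that `⟨⋃_{x ∈ R} λ_x^G⟩ = G`. -/
def IsRackEnvelope {X : Type*} (G : Subgroup (Equiv.Perm X)) (R : Set X)
    (Λ : R → Equiv.Perm X) : Prop :=
  (∀ x : R, Λ x ∈ cgStab G (x : X)) ∧
  Subgroup.closure (⋃ x : R, conjClassOf G (Λ x)) = G

/- ######## auxiliary development ######## -/

section Aux

variable {X : Type*}

lemma RackStr.ext' {Q Q' : RackStr X} (h : Q.op = Q'.op) : Q = Q' := by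
  cases Q; cases Q'; cases h; rfl

lemma RackStr.L_apply (Q : RackStr X) (x y : X) : Q.L x y = Q.op x y := rfl

lemma RackStr.L_mem_lmlt (Q : RackStr X) (x : X) : Q.L x ∈ Q.lmlt :=
  Subgroup.subset_closure ⟨x, rfl⟩

/-- The subgroup of permutations that conjugate translations equivariantly. -/
def RackStr.conjSub (Q : RackStr X) : Subgroup (Equiv.Perm X) where
  carrier := {f | ∀ y, f * Q.L y * f⁻¹ = Q.L (f y)}
  one_mem' := by intro y; simp
  mul_mem' := by
    intro a b ha hb y
    have h1 : a * (b * Q.L y * b⁻¹) * a⁻¹ = Q.L (a (b y)) := by rw [hb y]; exact ha (b y)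
    calc a * b * Q.L y * (a * b)⁻¹ = a * (b * Q.L y * b⁻¹) * a⁻¹ := by group
      _ = Q.L (a (b y)) := h1
      _ = Q.L ((a * b) y) := rfl
  inv_mem' := by
    intro a ha y
    have h1 : a * Q.L (a⁻¹ y) * a⁻¹ = Q.L (a (a⁻¹ y)) := ha (a⁻¹ y)
    rw [show a (a⁻¹ y) = y from Equiv.apply_symm_apply a y] at h1
    calc a⁻¹ * Q.L y * a⁻¹⁻¹ = a⁻¹ * (a * Q.L (a⁻¹ y) * a⁻¹) * a := by rw [h1]; group
      _ = Q.L (a⁻¹ y) := by group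

lemma RackStr.L_mem_conjSub (Q : RackStr X) (z : X) : Q.L z ∈ Q.conjSub := by
  intro y
  have key : ∀ w, Q.L z (Q.L y w) = Q.L (Q.L z y) (Q.L z w) := fun w => Q.self_distrib z y w
  ext w
  have := key ((Q.L z)⁻¹ w)
  simp only [Equiv.Perm.coe_inv, Equiv.apply_symm_apply] at this
  simpa [Equiv.Perm.mul_apply] using this

lemma RackStr.lconj (Q : RackStr X) {f : Equiv.Perm X} (hf : f ∈ Q.lmlt) (y : X) :
    f * Q.L y * f⁻¹ = Q.L (f y) := by
  have hle : Q.lmlt ≤ Q.conjSub := by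
    rw [RackStr.lmlt, Subgroup.closure_le]
    rintro _ ⟨z, rfl⟩
    exact Q.L_mem_conjSub z
  exact hle hf y

variable {G : Subgroup (Equiv.Perm X)} {R : Set X}

section Bwd

variable (hR : IsTransversal G R) (Λ : R → Equiv.Perm X)

noncomputable def rep (y : X) : X := (hR y).exists.choose

lemma rep_mem (y : X) : rep hR y ∈ R := (hR y).exists.choose_spec.1

noncomputable def gel (y : X) : Equiv.Perm X := (hR y).exists.choose_spec.2.choose

lemma gel_mem (y : X) : gel hR y ∈ G := (hR y).exists.choose_spec.2.choose_spec.1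

lemma gel_smul (y : X) : gel hR y • y = rep hR y := (hR y).exists.choose_spec.2.choose_spec.2

noncomputable def Lof (y : X) : Equiv.Perm X :=
  (gel hR y)⁻¹ * Λ ⟨rep hR y, rep_mem hR y⟩ * gel hR y

lemma Lof_spec (hΛ : ∀ x : R, Λ x ∈ cgStab G (x : X)) (x : R) (g : Equiv.Perm X)
    (hg : g ∈ G) (y : X) (hgy : g • y = (x : X)) :
    Lof hR Λ y = g⁻¹ * Λ x * g := by
  have hrep : (x : X) = rep hR y :=
    (hR y).unique ⟨x.2, g, hg, hgy⟩ ⟨rep_mem hR y, gel hR y, gel_mem hR y, gel_smul hR y⟩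
  have hx : (⟨rep hR y, rep_mem hR y⟩ : R) = x := Subtype.ext hrep.symm
  set g₀ := gel hR y with hg₀
  set Λx := Λ x with hΛx
  have hfix : g₀⁻¹ • (x : X) = y := by
    rw [hrep, ← gel_smul hR y, inv_smul_smul]
  have hstab : g * g₀⁻¹ ∈ stabIn G (x : X) := by
    refine Subgroup.mem_inf.mpr ⟨mul_mem hg (inv_mem (gel_mem hR y)), ?_⟩
    rw [MulAction.mem_stabilizer_iff, mul_smul, hfix, hgy]
  have hc : (g * g₀⁻¹) * Λx = Λx * (g * g₀⁻¹) :=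
    (Subgroup.mem_centralizer_iff.mp (hΛ x).2) _ hstab
  have key : g * g₀⁻¹ * Λx * g₀ * g⁻¹ = Λx := by
    rw [hc]; group
  rw [Lof, hx, ← hΛx]
  calc g₀⁻¹ * Λx * g₀ = g⁻¹ * (g * g₀⁻¹ * Λx * g₀ * g⁻¹) * g := by group
    _ = g⁻¹ * Λx * g := by rw [key]

lemma Lof_mem (hΛ : ∀ x : R, Λ x ∈ cgStab G (x : X)) (y : X) : Lof hR Λ y ∈ G :=
  mul_mem (mul_mem (inv_mem (gel_mem hR y)) (hΛ _).1) (gel_mem hR y)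

lemma Lof_rep (hΛ : ∀ x : R, Λ x ∈ cgStab G (x : X)) (x : R) :
    Lof hR Λ (x : X) = Λ x := by
  have := Lof_spec hR Λ hΛ x 1 (one_mem G) (x : X) (one_smul _ _)
  simpa using this

lemma Lof_equivariant (hΛ : ∀ x : R, Λ x ∈ cgStab G (x : X)) (g : Equiv.Perm X)
    (hg : g ∈ G) (y : X) :
    Lof hR Λ (g • y) = g * Lof hR Λ y * g⁻¹ := by
  set x : R := ⟨rep hR y, rep_mem hR y⟩ with hx
  have h1 : Lof hR Λ y = (gel hR y)⁻¹ * Λ x * gel hR y :=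
    Lof_spec hR Λ hΛ x (gel hR y) (gel_mem hR y) y (gel_smul hR y)
  have h2 : (gel hR y * g⁻¹) • (g • y) = (x : X) := by
    rw [mul_smul, inv_smul_smul]; exact gel_smul hR y
  have h3 : Lof hR Λ (g • y) = (gel hR y * g⁻¹)⁻¹ * Λ x * (gel hR y * g⁻¹) :=
    Lof_spec hR Λ hΛ x _ (mul_mem (gel_mem hR y) (inv_mem hg)) (g • y) h2
  rw [h3, h1]; group

noncomputable def rackOf (hΛ : ∀ x : R, Λ x ∈ cgStab G (x : X)) : RackStr X where
  op y z := Lof hR Λ y z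
  bij y := (Lof hR Λ y).bijective
  self_distrib y z w := by
    have h1 : Lof hR Λ (Lof hR Λ y z) = Lof hR Λ y * Lof hR Λ z * (Lof hR Λ y)⁻¹ := by
      have := Lof_equivariant hR Λ hΛ (Lof hR Λ y) (Lof_mem hR Λ hΛ y) z
      simpa [Equiv.Perm.smul_def] using this
    show Lof hR Λ y (Lof hR Λ z w) = Lof hR Λ (Lof hR Λ y z) (Lof hR Λ y w)
    rw [h1]
    simp [Equiv.Perm.mul_apply]

lemma rackOf_L (hΛ : ∀ x : R, Λ x ∈ cgStab G (x : X)) (y : X) :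
    (rackOf hR Λ hΛ).L y = Lof hR Λ y := by
  ext z; rfl

lemma rackOf_lmlt (hΛ : ∀ x : R, Λ x ∈ cgStab G (x : X))
    (hΛ2 : Subgroup.closure (⋃ x : R, conjClassOf G (Λ x)) = G) :
    (rackOf hR Λ hΛ).lmlt = G := by
  apply le_antisymm
  · rw [RackStr.lmlt, Subgroup.closure_le]
    rintro _ ⟨y, rfl⟩
    rw [rackOf_L]
    exact Lof_mem hR Λ hΛ y
  · refine le_trans (le_of_eq hΛ2.symm) ?_
    rw [Subgroup.closure_le]
    rintro h hmem
    simp only [Set.mem_iUnion] at hmem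
    obtain ⟨x, g, hg, rfl⟩ := hmem
    have heq : g * Λ x * g⁻¹ = Lof hR Λ (g • (x : X)) := by
      rw [Lof_equivariant hR Λ hΛ g hg, Lof_rep hR Λ hΛ]
    rw [heq, ← rackOf_L hR Λ hΛ]
    exact (rackOf hR Λ hΛ).L_mem_lmlt _

end Bwd

section Fwd

lemma fwd_envelope (hR : IsTransversal G R) (Q : RackStr X) (hQ : Q.lmlt = G) :
    IsRackEnvelope G R (fun x : R => Q.L (x : X)) := by
  constructor
  · intro x
    refine Subgroup.mem_inf.mpr ⟨?_, ?_⟩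
    · rw [← hQ]; exact Q.L_mem_lmlt _
    · rw [Subgroup.mem_centralizer_iff]
      intro s hs
      have hs' : s ∈ G ⊓ MulAction.stabilizer (Equiv.Perm X) (x : X) := hs
      have hsG : s ∈ Q.lmlt := by rw [hQ]; exact hs'.1
      have hsx : s (x : X) = (x : X) := hs'.2
      have hconj := Q.lconj hsG (x : X)
      rw [hsx] at hconj
      calc s * Q.L (x : X) = (s * Q.L (x : X) * s⁻¹) * s := by group
        _ = Q.L (x : X) * s := by rw [hconj]
  · apply le_antisymm
    · rw [Subgroup.closure_le]
      rintro h hmem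
      simp only [Set.mem_iUnion] at hmem
      obtain ⟨x, g, hg, rfl⟩ := hmem
      have hgl : g ∈ Q.lmlt := by rw [hQ]; exact hg
      rw [Q.lconj hgl, ← hQ]
      exact Q.L_mem_lmlt _
    · conv_lhs => rw [← hQ]
      rw [RackStr.lmlt]
      apply Subgroup.closure_mono
      rintro _ ⟨y, rfl⟩
      obtain ⟨x, hx, g, hg, hgy⟩ := (hR y).exists
      simp only [Set.mem_iUnion]
      refine ⟨⟨x, hx⟩, g⁻¹, inv_mem hg, ?_⟩
      have hginv : g⁻¹ ∈ Q.lmlt := by rw [hQ]; exact inv_mem hg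
      rw [Q.lconj hginv x]
      congr 1
      rw [← hgy, Equiv.Perm.smul_def, Equiv.Perm.coe_inv, Equiv.symm_apply_apply]

end Fwd

end Aux


/-- Theorem `Th:Correspondence`, rack case: for a nonempty `X` and `G ≤ S_X`
there is a one-to-one correspondence between racks `(X,*)` with `Lmlt(X,*) = G` and rack
envelopes `(G,Λ)`; the rack `(X,*)` corresponds to `(G, (L_x : x ∈ R))`, and the envelope
`(G, (λ_x : x ∈ R))` corresponds to the rack with `L_{g•x} = g * λ_x * g⁻¹`; these two
assignments are mutually inverse. -/
theorem rack_envelope_correspondence {X : Type*} [Nonempty X]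
    (G : Subgroup (Equiv.Perm X)) (R : Set X) (hR : IsTransversal G R) :
    ∃ e : {Q : RackStr X // Q.lmlt = G} ≃ {Λ : R → Equiv.Perm X // IsRackEnvelope G R Λ},
      (∀ Q : {Q : RackStr X // Q.lmlt = G}, ∀ x : R, ∀ y : X,
        ((e Q : R → Equiv.Perm X) x) y = Q.val.op (x : X) y) ∧
      (∀ Λ : {Λ : R → Equiv.Perm X // IsRackEnvelope G R Λ}, ∀ x : R, ∀ g ∈ G, ∀ z : X,
        (e.symm Λ).val.op (g • (x : X)) z = (g * (Λ : R → Equiv.Perm X) x * g⁻¹) z) := by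
  classical
  refine ⟨⟨fun Q => ⟨fun x : R => Q.val.L (x : X), fwd_envelope hR Q.val Q.2⟩,
          fun Λ => ⟨rackOf hR Λ.val Λ.2.1, rackOf_lmlt hR Λ.val Λ.2.1 Λ.2.2⟩,
          ?_, ?_⟩, ?_, ?_⟩
  · -- left_inv
    rintro ⟨Q, hQ⟩
    apply Subtype.ext
    apply RackStr.ext'
    funext y z
    show Lof hR (fun x : R => Q.L (x : X)) y z = Q.op y z
    set Λ : R → Equiv.Perm X := fun x : R => Q.L (x : X) with hΛdef
    have hΛ := (fwd_envelope hR Q hQ).1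
    have h1 : Lof hR Λ y = (gel hR y)⁻¹ * Q.L (rep hR y) * gel hR y :=
      Lof_spec hR Λ hΛ ⟨rep hR y, rep_mem hR y⟩ (gel hR y) (gel_mem hR y) y (gel_smul hR y)
    have hginv : (gel hR y)⁻¹ ∈ Q.lmlt := by rw [hQ]; exact inv_mem (gel_mem hR y)
    have h2 := Q.lconj hginv (rep hR y)
    rw [inv_inv] at h2
    have h3 : (gel hR y)⁻¹ (rep hR y) = y := by
      rw [← gel_smul hR y, Equiv.Perm.smul_def, Equiv.Perm.coe_inv, Equiv.symm_apply_apply]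
    rw [h1, h2, h3]
    rfl
  · -- right_inv
    rintro ⟨Λ, hΛ⟩
    apply Subtype.ext
    funext x
    show (rackOf hR Λ hΛ.1).L (x : X) = Λ x
    rw [rackOf_L, Lof_rep hR Λ hΛ.1]
  · -- property 1
    rintro ⟨Q, hQ⟩ x y
    rfl
  · -- property 2
    rintro ⟨Λ, hΛ⟩ x g hg z
    show (rackOf hR Λ hΛ.1).op (g • (x : X)) z = (g * Λ x * g⁻¹) z
    show Lof hR Λ (g • (x : X)) z = (g * Λ x * g⁻¹) z
    rw [Lof_equivariant hR Λ hΛ.1 g hg, Lof_rep hR Λ hΛ.1]
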